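/- Let C be a small category, κ a regular cardinal, and T a monad on the presheaf category Pr(C) = Cᵒᵖ ⥤ Type whose underlying endofunctor preserves colimits of κ-filtered diagrams. Then the Eilenberg–Moore category Alg(T) of T-algebras has all small colimits. -/

import Mathlib

open CategoryTheory

/-- A category `J` is `κ`-filtered if every diagram in `J` of size smaller than
`κ` (measured by the cardinality of its category of arrows) admits a cocone. -/
def IsCardinalFiltered (J : Type u) [SmallCategory J] (κ : Cardinal.{u}) : Prop :=
  ∀ (A : Type u) [SmallCategory A], Cardinal.mk (Arrow A) < κ →
    ∀ F : A ⥤ J, Nonempty (Limits.Cocone F)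

open CategoryTheory Limits Opposite GrothendieckTopology
universe u
attribute [local instance] Classical.propDecidable

attribute [local instance] Classical.propDecidable

variable {C : Type u} [SmallCategory C]

/-- The size of a presheaf: cardinality of its total space of sections. -/
noncomputable def psize (X : Cᵒᵖ ⥤ Type u) : Cardinal.{u} :=
  Cardinal.mk (Σ c : C, X.obj (op c))

lemma psize_eq_of_iso {X Y : Cᵒᵖ ⥤ Type u} (e : X ≅ Y) : psize X = psize Y :=
  Cardinal.mk_congr (Equiv.sigmaCongrRight fun c => ((e.app (op c)).toEquiv))

/-- A small structure representing presheaves carried by subsets of `β`. -/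
structure PreRep (C : Type u) [SmallCategory C] (β : Type u) : Type u where
  mem : C → Set β
  map : ∀ {c d : C}, (d ⟶ c) → β → β
  map_mem : ∀ {c d : C} (f : d ⟶ c) {x : β}, x ∈ mem c → map f x ∈ mem d
  map_id : ∀ (c : C) (x : β), x ∈ mem c → map (𝟙 c) x = x
  map_comp : ∀ {c d e : C} (f : e ⟶ d) (g : d ⟶ c) (x : β), x ∈ mem c →
    map (f ≫ g) x = map f (map g x)

def PreRep.toPresheaf {β : Type u} (p : PreRep C β) : Cᵒᵖ ⥤ Type u where
  obj c := p.mem c.unop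
  map {c d} f := ↾fun x => ⟨p.map f.unop x.1, p.map_mem f.unop x.2⟩
  map_id c := by ext x; exact (p.map_id _ _ x.2)
  map_comp {c d e} f g := by ext x; exact (p.map_comp g.unop f.unop _ x.2)

noncomputable def pmapAux (X : Cᵒᵖ ⥤ Type u) {β : Type u}
    (e : (Σ c : C, X.obj (op c)) ↪ β) {c d : C} (_ : d ⟶ c) (y : β) : β :=
  if h : ∃ x : X.obj (op c), e ⟨c, x⟩ = y then e ⟨d, X.map ‹d ⟶ c›.op h.choose⟩ else y

lemma pmapAux_apply (X : Cᵒᵖ ⥤ Type u) {β : Type u}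
    (e : (Σ c : C, X.obj (op c)) ↪ β) {c d : C} (f : d ⟶ c) (x₀ : X.obj (op c)) :
    pmapAux X e f (e ⟨c, x₀⟩) = e ⟨d, X.map f.op x₀⟩ := by
  have hinj : ∀ (x y : X.obj (op c)), e ⟨c, x⟩ = e ⟨c, y⟩ → x = y := fun x y hxy =>
    eq_of_heq (Sigma.ext_iff.mp (e.injective hxy)).2
  have hex : ∃ x : X.obj (op c), e ⟨c, x⟩ = e ⟨c, x₀⟩ := ⟨x₀, rfl⟩
  have hch : hex.choose = x₀ := hinj _ _ hex.choose_spec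
  rw [pmapAux, dif_pos hex, hch]

lemma exists_preRep (X : Cᵒᵖ ⥤ Type u) (β : Type u) (h : psize X ≤ Cardinal.mk β) :
    ∃ p : PreRep C β, Nonempty (X ≅ p.toPresheaf) := by
  rw [psize, Cardinal.le_def] at h
  obtain ⟨e⟩ := h
  have hinj : ∀ (c : C) (x y : X.obj (op c)), e ⟨c, x⟩ = e ⟨c, y⟩ → x = y := by
    intro c x y hxy
    exact eq_of_heq (Sigma.ext_iff.mp (e.injective hxy)).2
  have hmap : ∀ {c d : C} (f : d ⟶ c) (x₀ : X.obj (op c)),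
      pmapAux X e f (e ⟨c, x₀⟩) = e ⟨d, X.map f.op x₀⟩ := fun f x₀ => pmapAux_apply X e f x₀
  refine ⟨{ mem := fun c => Set.range (fun x : X.obj (op c) => e ⟨c, x⟩)
            map := fun f y => pmapAux X e f y
            map_mem := ?_, map_id := ?_, map_comp := ?_ }, ?_⟩
  · rintro c d f x ⟨x₀, rfl⟩
    simp only [hmap]; exact ⟨_, rfl⟩
  · rintro c x ⟨x₀, rfl⟩
    simp only [hmap]
    simp
  · rintro c d e' f g x ⟨x₀, rfl⟩
    simp only [hmap, ← FunctorToTypes.map_comp_apply]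
    rfl
  · refine ⟨NatIso.ofComponents (fun c => Equiv.toIso (Equiv.ofBijective
      (fun x => ⟨e ⟨c.unop, x⟩, ⟨x, rfl⟩⟩) ⟨?_, ?_⟩)) ?_⟩
    · intro x y hxy
      exact hinj c.unop _ _ (congrArg Subtype.val hxy)
    · rintro ⟨y, x₀, rfl⟩
      exact ⟨x₀, rfl⟩
    · intro c d f
      ext x
      apply Subtype.ext
      show e ⟨d.unop, X.map f x⟩ = pmapAux X e f.unop (e ⟨c.unop, x⟩)
      rw [hmap]
      congr 1

noncomputable def boundT (T : Monad (Cᵒᵖ ⥤ Type u)) (l : Cardinal.{u}) : Cardinal.{u} :=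
  ⨆ p : PreRep C l.out, psize (T.obj p.toPresheaf)

lemma psize_T_le (T : Monad (Cᵒᵖ ⥤ Type u)) {X : Cᵒᵖ ⥤ Type u} {l : Cardinal.{u}}
    (h : psize X ≤ l) : psize (T.obj X) ≤ boundT T l := by
  obtain ⟨p, ⟨e⟩⟩ := exists_preRep X l.out (by rwa [Cardinal.mk_out])
  rw [psize_eq_of_iso (T.toFunctor.mapIso e)]
  exact le_ciSup (Cardinal.bddAbove_range _) p

variable {T : Monad (Cᵒᵖ ⥤ Type u)}

/-- one closure step: add all algebra-operation values on sections of `S`. -/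
def algStep (A : T.Algebra) (S : Subfunctor A.A) : Subfunctor A.A where
  obj c := S.obj c ∪ Set.range (fun x : (T.obj S.toFunctor).obj c => (T.map S.ι ≫ A.a).app c x)
  map := by
    rintro c d i x (hx | ⟨y, rfl⟩)
    · exact Or.inl (S.map i hx)
    · exact Or.inr ⟨(T.obj S.toFunctor).map i y,
        FunctorToTypes.naturality (T.map S.ι ≫ A.a) i y⟩

lemma le_algStep (A : T.Algebra) (S : Subfunctor A.A) : S ≤ algStep A S :=
  fun c _ hx => Or.inl hx

def SubClosed (A : T.Algebra) (S : Subfunctor A.A) : Prop :=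
  ∀ (c : Cᵒᵖ) (x : (T.obj S.toFunctor).obj c), (T.map S.ι ≫ A.a).app c x ∈ S.obj c

noncomputable def algChain (A : T.Algebra) (S₀ : Subfunctor A.A) (o : Ordinal.{u}) :
    Subfunctor A.A :=
  { obj := fun c => S₀.obj c ∪
      ⋃ i : Shrink.{u} (Set.Iio o),
        (algStep A (algChain A S₀ ((equivShrink (Set.Iio o)).symm i).1)).obj c
    map := by
      rintro c d f x (hx | hx)
      · exact Or.inl (S₀.map f hx)
      · rw [Set.mem_iUnion] at hx
        obtain ⟨i, hx⟩ := hx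
        exact Or.inr (Set.mem_iUnion.mpr ⟨i, (algStep A _).map f hx⟩) }
  termination_by o
  decreasing_by all_goals exact ((equivShrink (Set.Iio o)).symm i).2

lemma mem_algChain_iff {A : T.Algebra} {S₀ : Subfunctor A.A} {o : Ordinal.{u}} {c : Cᵒᵖ}
    {x : A.A.obj c} :
    x ∈ (algChain A S₀ o).obj c ↔
      x ∈ S₀.obj c ∨ ∃ o' < o, x ∈ (algStep A (algChain A S₀ o')).obj c := by
  rw [algChain]
  constructor
  · rintro (h | h)
    · exact Or.inl h
    · rw [Set.mem_iUnion] at h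
      obtain ⟨i, h⟩ := h
      exact Or.inr ⟨_, ((equivShrink (Set.Iio o)).symm i).2, h⟩
  · rintro (h | ⟨o', ho', h⟩)
    · exact Or.inl h
    · refine Or.inr (Set.mem_iUnion.mpr ⟨equivShrink (Set.Iio o) ⟨o', ho'⟩, ?_⟩)
      simpa using h

lemma le_algChain (A : T.Algebra) (S₀ : Subfunctor A.A) (o : Ordinal.{u}) :
    S₀ ≤ algChain A S₀ o := fun c x hx => mem_algChain_iff.mpr (Or.inl hx)

lemma algChain_mono (A : T.Algebra) (S₀ : Subfunctor A.A) {o₁ o₂ : Ordinal.{u}} (h : o₁ ≤ o₂) :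
    algChain A S₀ o₁ ≤ algChain A S₀ o₂ := by
  intro c x hx
  rcases mem_algChain_iff.mp hx with h' | ⟨o', ho', h'⟩
  · exact mem_algChain_iff.mpr (Or.inl h')
  · exact mem_algChain_iff.mpr (Or.inr ⟨o', lt_of_lt_of_le ho' h, h'⟩)

lemma algStep_algChain_le (A : T.Algebra) (S₀ : Subfunctor A.A) {o' o : Ordinal.{u}}
    (h : o' < o) : algStep A (algChain A S₀ o') ≤ algChain A S₀ o :=
  fun c x hx => mem_algChain_iff.mpr (Or.inr ⟨o', h, hx⟩)

lemma mem_algChain_limit {A : T.Algebra} {S₀ : Subfunctor A.A} {o : Ordinal.{u}}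
    (ho : Order.IsSuccLimit o) {c : Cᵒᵖ} {x : A.A.obj c} :
    x ∈ (algChain A S₀ o).obj c ↔ ∃ o' < o, x ∈ (algChain A S₀ o').obj c := by
  constructor
  · intro h
    rcases mem_algChain_iff.mp h with h' | ⟨o', ho', h'⟩
    · exact ⟨0, ho.pos, le_algChain A S₀ 0 c h'⟩
    · exact ⟨Order.succ o', ho.succ_lt ho',
        mem_algChain_iff.mpr (Or.inr ⟨o', Order.lt_succ o', h'⟩)⟩
  · rintro ⟨o', ho', h⟩
    exact algChain_mono A S₀ ho'.le c h

section ChainColimit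

variable (A : T.Algebra) (S₀ : Subfunctor A.A)

noncomputable def chainDiagram (O : Ordinal.{u}) : O.ToType ⥤ (Cᵒᵖ ⥤ Type u) where
  obj i := (algChain A S₀ (((Ordinal.ToType.mk (o := O))).symm i).1).toFunctor
  map {i j} f := Subfunctor.homOfLe (algChain_mono A S₀ (by
    exact_mod_cast ((Ordinal.ToType.mk (o := O))).symm.monotone (leOfHom f)))
  map_id _ := rfl
  map_comp _ _ := rfl

noncomputable def chainCocone (O : Ordinal.{u}) : Cocone (chainDiagram A S₀ O) where
  pt := (algChain A S₀ O).toFunctor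
  ι :=
    { app := fun i => Subfunctor.homOfLe
        (algChain_mono A S₀ (((Ordinal.ToType.mk (o := O))).symm i).2.le)
      naturality := fun _ _ _ => rfl }

noncomputable def chainCoconeIsColimit {O : Ordinal.{u}} (hO : Order.IsSuccLimit O) :
    IsColimit (chainCocone A S₀ O) :=
  evaluationJointlyReflectsColimits _ (fun c =>
    Types.FilteredColimit.isColimitOf _ _
      (fun x => by
        obtain ⟨o, ho, h⟩ := (mem_algChain_limit hO).mp x.2
        refine ⟨(Ordinal.ToType.mk (o := O)) ⟨o, ho⟩, ⟨x.1, ?_⟩, ?_⟩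
        · simpa using h
        · exact Subtype.ext rfl)
      (fun i j xi xj hx => by
        refine ⟨max i j, homOfLE (le_max_left _ _), homOfLE (le_max_right _ _), ?_⟩
        have h3 : xi.val = xj.val := congrArg Subtype.val hx
        exact Subtype.ext h3))

lemma subClosed_algChain_limit {O : Ordinal.{u}} (hO : Order.IsSuccLimit O)
    (hp : PreservesColimitsOfShape O.ToType T.toFunctor) :
    SubClosed A (algChain A S₀ O) := by
  intro c x
  have hc : IsColimit (T.toFunctor.mapCocone (chainCocone A S₀ O)) :=
    isColimitOfPreserves T.toFunctor (chainCoconeIsColimit A S₀ hO)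
  have hc' : IsColimit (((evaluation Cᵒᵖ (Type u)).obj c).mapCocone
      (T.toFunctor.mapCocone (chainCocone A S₀ O))) := isColimitOfPreserves _ hc
  obtain ⟨j, y, hy⟩ := Types.jointly_surjective _ hc' x
  set oj : Ordinal.{u} := (((Ordinal.ToType.mk (o := O))).symm j).1 with hoj
  have hojO : oj < O := (((Ordinal.ToType.mk (o := O))).symm j).2
  have key : (T.map (algChain A S₀ O).ι).app c x
      = (T.map (algChain A S₀ oj).ι).app c y := by
    rw [← hy]
    have h2 : (chainCocone A S₀ O).ι.app j ≫ (algChain A S₀ O).ι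
        = (algChain A S₀ oj).ι := Subfunctor.homOfLe_ι (algChain_mono A S₀ (((Ordinal.ToType.mk (o := O))).symm j).2.le)
    calc (T.map (algChain A S₀ O).ι).app c ((T.map ((chainCocone A S₀ O).ι.app j)).app c y)
        = (T.map ((chainCocone A S₀ O).ι.app j) ≫ T.map (algChain A S₀ O).ι).app c y := rfl
      _ = (T.map ((chainCocone A S₀ O).ι.app j ≫ (algChain A S₀ O).ι)).app c y := by
            exact (congrArg (fun g : T.obj ((chainDiagram A S₀ O).obj j) ⟶ T.obj A.A => g.app c y) (T.map_comp ((chainCocone A S₀ O).ι.app j) (algChain A S₀ O).ι)).symm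
      _ = (T.map ((algChain A S₀ oj).ι)).app c y := by rw [h2]; rfl
  show A.a.app c ((T.map (algChain A S₀ O).ι).app c x) ∈ (algChain A S₀ O).obj c
  rw [key]
  have hmem : (T.map (algChain A S₀ oj).ι ≫ A.a).app c y
      ∈ (algStep A (algChain A S₀ oj)).obj c := Or.inr ⟨y, rfl⟩
  exact algStep_algChain_le A S₀ hojO c hmem

end ChainColimit

section Size

lemma mk_obj_le_psize (X : Cᵒᵖ ⥤ Type u) (c : C) :
    Cardinal.mk (X.obj (op c)) ≤ psize X :=
  Cardinal.mk_le_of_injective (f := fun x : X.obj (op c) => (⟨c, x⟩ : Σ c : C, X.obj (op c)))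
    (fun x y h => eq_of_heq (Sigma.ext_iff.mp h).2)

lemma mk_sub_obj_le {X : Cᵒᵖ ⥤ Type u} (S : Subfunctor X) (c : C) :
    Cardinal.mk (S.obj (op c)) ≤ psize S.toFunctor :=
  mk_obj_le_psize S.toFunctor c

lemma psize_algStep_le (A : T.Algebra) (S : Subfunctor A.A) :
    psize (algStep A S).toFunctor ≤ psize S.toFunctor + psize (T.obj S.toFunctor) := by
  rw [psize, psize, psize, Cardinal.mk_sigma, Cardinal.mk_sigma, Cardinal.mk_sigma,
    ← Cardinal.sum_add_distrib]
  refine Cardinal.sum_le_sum _ _ fun c => ?_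
  show Cardinal.mk ((algStep A S).obj (op c)) ≤
    Cardinal.mk (S.obj (op c)) + Cardinal.mk ((T.obj S.toFunctor).obj (op c))
  refine le_trans (Cardinal.mk_union_le _ _) (add_le_add le_rfl Cardinal.mk_range_le)

lemma algChain_obj_eq (A : T.Algebra) (S₀ : Subfunctor A.A) (o : Ordinal.{u}) (c : Cᵒᵖ) :
    (algChain A S₀ o).obj c = S₀.obj c ∪
      ⋃ i : Shrink.{u} (Set.Iio o),
        (algStep A (algChain A S₀ ((equivShrink (Set.Iio o)).symm i).1)).obj c := by
  ext x
  rw [Set.mem_union, Set.mem_iUnion, mem_algChain_iff]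
  constructor
  · rintro (h | ⟨o', ho', h⟩)
    · exact Or.inl h
    · refine Or.inr ⟨equivShrink (Set.Iio o) ⟨o', ho'⟩, ?_⟩
      simpa using h
  · rintro (h | ⟨i, h⟩)
    · exact Or.inl h
    · exact Or.inr ⟨_, ((equivShrink (Set.Iio o)).symm i).2, h⟩

noncomputable def bnd (T : Monad (Cᵒᵖ ⥤ Type u)) (l : Cardinal.{u}) :
    Ordinal.{u} → Cardinal.{u}
  | o => l + Cardinal.mk C * (Cardinal.mk (Shrink.{u} (Set.Iio o)) *
      ⨆ i : Shrink.{u} (Set.Iio o),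
        (bnd T l ((equivShrink (Set.Iio o)).symm i).1 +
          boundT T (bnd T l ((equivShrink (Set.Iio o)).symm i).1)))
  termination_by o => o
  decreasing_by all_goals exact ((equivShrink (Set.Iio o)).symm i).2

lemma psize_algChain_le (A : T.Algebra) (S₀ : Subfunctor A.A) {l : Cardinal.{u}}
    (h0 : psize S₀.toFunctor ≤ l) :
    ∀ o : Ordinal.{u}, psize (algChain A S₀ o).toFunctor ≤ bnd T l o
  | o => by
    have IH : ∀ o' : Ordinal.{u}, o' < o →
        psize (algChain A S₀ o').toFunctor ≤ bnd T l o' :=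
      fun o' ho' => psize_algChain_le A S₀ h0 o'
    rw [bnd, psize, Cardinal.mk_sigma]
    set K : Cardinal.{u} := Cardinal.mk (Shrink.{u} (Set.Iio o)) *
      ⨆ i : Shrink.{u} (Set.Iio o),
        (bnd T l ((equivShrink (Set.Iio o)).symm i).1 +
          boundT T (bnd T l ((equivShrink (Set.Iio o)).symm i).1)) with hK
    have step1 : ∀ c : C,
        Cardinal.mk ((algChain A S₀ o).toFunctor.obj (op c)) ≤
          Cardinal.mk (S₀.obj (op c)) + K := by
      intro c
      have h1 : Cardinal.mk ((algChain A S₀ o).toFunctor.obj (op c))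
          = Cardinal.mk ((algChain A S₀ o).obj (op c)) := rfl
      rw [h1, algChain_obj_eq]
      refine le_trans (Cardinal.mk_union_le _ _) (add_le_add le_rfl ?_)
      refine le_trans (Cardinal.mk_iUnion_le _) (mul_le_mul' le_rfl ?_)
      refine ciSup_mono (Cardinal.bddAbove_range _) fun i => ?_
      refine le_trans (mk_sub_obj_le _ c) ?_
      refine le_trans (psize_algStep_le A _)
        (add_le_add (IH _ ((equivShrink (Set.Iio o)).symm i).2) ?_)
      exact psize_T_le T (IH _ ((equivShrink (Set.Iio o)).symm i).2)
    calc (Cardinal.sum fun c : C => Cardinal.mk ((algChain A S₀ o).toFunctor.obj (op c)))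
        ≤ Cardinal.sum fun c : C => (Cardinal.mk (S₀.obj (op c)) + K) :=
          Cardinal.sum_le_sum _ _ step1
      _ = (Cardinal.sum fun c : C => Cardinal.mk (S₀.obj (op c))) + Cardinal.mk C * K := by
          rw [← Cardinal.sum_const' C K]; exact Cardinal.sum_add_distrib _ _
      _ ≤ l + Cardinal.mk C * K := by
          refine add_le_add ?_ le_rfl
          refine le_trans (le_of_eq ?_) h0
          rw [psize, Cardinal.mk_sigma]
          rfl
  termination_by o => o
  decreasing_by all_goals exact ho'

end Size

section Subalgebra

lemma range_le_of_mem {F G : Cᵒᵖ ⥤ Type u} {S : Subfunctor G} (f : F ⟶ G)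
    (h : ∀ c x, f.app c x ∈ S.obj c) : Subfunctor.range f ≤ S := by
  rintro c _ ⟨x, rfl⟩
  exact h c x

variable (A : T.Algebra)

noncomputable def subAlgebra {S : Subfunctor A.A} (hS : SubClosed A S) : T.Algebra where
  A := S.toFunctor
  a := S.lift (T.map S.ι ≫ A.a) (range_le_of_mem _ hS)
  unit := by
    rw [← cancel_mono S.ι]
    have hη := T.η.naturality S.ι
    simp only [Functor.id_map] at hη
    simp only [Category.assoc, Subfunctor.lift_ι, Category.id_comp]
    rw [← Category.assoc, ← hη, Category.assoc, A.unit]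
    simp
  assoc := by
    rw [← cancel_mono S.ι]
    have hμ := T.μ.naturality S.ι
    simp only [Functor.comp_map] at hμ
    simp only [Category.assoc, Subfunctor.lift_ι]
    rw [← Category.assoc, ← hμ, Category.assoc]
    conv_rhs => rw [← Category.assoc, ← Functor.map_comp, Subfunctor.lift_ι,
      Functor.map_comp, Category.assoc]
    rw [A.assoc]
  -- note Mathlib: assoc : T.μ.app A ≫ a = T.map a ≫ a

noncomputable def subAlgebraι {S : Subfunctor A.A} (hS : SubClosed A S) :
    subAlgebra A hS ⟶ A where
  f := S.ι
  h := by
    show T.map S.ι ≫ A.a = S.lift (T.map S.ι ≫ A.a) (range_le_of_mem _ hS) ≫ S.ι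
    rw [Subfunctor.lift_ι]

noncomputable def corestrict {B : T.Algebra} (φ : B ⟶ A) {S : Subfunctor A.A}
    (hS : SubClosed A S) (hφ : ∀ c x, φ.f.app c x ∈ S.obj c) : B ⟶ subAlgebra A hS where
  f := S.lift φ.f (range_le_of_mem _ hφ)
  h := by
    apply (cancel_mono S.ι).mp
    show T.map (S.lift φ.f (range_le_of_mem _ hφ)) ≫ S.lift (T.map S.ι ≫ A.a) (range_le_of_mem _ hS) ≫ S.ι
      = (B.a ≫ S.lift φ.f (range_le_of_mem _ hφ)) ≫ S.ι
    rw [Subfunctor.lift_ι, Category.assoc, Subfunctor.lift_ι, ← Category.assoc,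
      ← Functor.map_comp, Subfunctor.lift_ι, φ.h]

lemma corestrict_ι {B : T.Algebra} (φ : B ⟶ A) {S : Subfunctor A.A}
    (hS : SubClosed A S) (hφ : ∀ c x, φ.f.app c x ∈ S.obj c) :
    corestrict A φ hS hφ ≫ subAlgebraι A hS = φ := by
  apply Monad.Algebra.Hom.ext
  show S.lift φ.f (range_le_of_mem _ hφ) ≫ S.ι = φ.f
  rw [Subfunctor.lift_ι]

end Subalgebra

section Transport

lemma transport_unit (B : T.Algebra) {Y : Cᵒᵖ ⥤ Type u} (e : B.A ≅ Y) :
    T.η.app Y ≫ (T.map e.inv ≫ B.a ≫ e.hom) = 𝟙 Y := by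
  have hη := T.η.naturality e.inv
  simp only [Functor.id_map] at hη
  rw [← Category.assoc, ← hη, Category.assoc, ← Category.assoc (T.η.app B.A), B.unit]
  simp

lemma transport_assoc (B : T.Algebra) {Y : Cᵒᵖ ⥤ Type u} (e : B.A ≅ Y) :
    T.μ.app Y ≫ (T.map e.inv ≫ B.a ≫ e.hom)
      = T.map (T.map e.inv ≫ B.a ≫ e.hom) ≫ (T.map e.inv ≫ B.a ≫ e.hom) := by
  have hμ := T.μ.naturality e.inv
  simp only [Functor.comp_map] at hμ
  rw [← Category.assoc, ← hμ]
  simp only [Functor.map_comp, Category.assoc]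
  rw [← Category.assoc (T.map e.hom), ← Functor.map_comp, e.hom_inv_id,
    CategoryTheory.Functor.map_id, Category.id_comp]
  simp only [Monad.Algebra.assoc_assoc]

end Transport


lemma isCardinalFiltered_toType (κ : Cardinal.{u}) (hκ : κ.IsRegular) :
    IsCardinalFiltered κ.ord.ToType κ := by
  intro A _ hA F
  have hAcard : Cardinal.mk A < κ :=
    lt_of_le_of_lt (Cardinal.mk_le_of_injective (f := fun a : A => Arrow.mk (𝟙 a))
      (fun a b hab => congrArg Comma.left hab)) hA
  have hsup : (⨆ a : A, (((Ordinal.ToType.mk (o := κ.ord))).symm (F.obj a)).1) < κ.ord := by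
    apply Ordinal.iSup_lt_ord
    · rwa [hκ.cof_eq]
    · exact fun a => (((Ordinal.ToType.mk (o := κ.ord))).symm (F.obj a)).2
  have hle : ∀ a : A, F.obj a ≤ (Ordinal.ToType.mk (o := κ.ord)) ⟨_, hsup⟩ := by
    intro a
    have h1 : F.obj a = (Ordinal.ToType.mk (o := κ.ord))
        (((Ordinal.ToType.mk (o := κ.ord))).symm (F.obj a)) := by simp
    rw [h1]
    apply ((Ordinal.ToType.mk (o := κ.ord))).monotone
    show (((Ordinal.ToType.mk (o := κ.ord))).symm (F.obj a)).1 ≤ _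
    exact le_ciSup (Ordinal.bddAbove_range _) a
  exact ⟨{ pt := (Ordinal.ToType.mk (o := κ.ord)) ⟨_, hsup⟩,
           ι := { app := fun a => homOfLE (hle a),
                  naturality := fun _ _ _ => Subsingleton.elim _ _ } }⟩

section Solution

def AlgStr (Y : Cᵒᵖ ⥤ Type u) : Type u :=
  {a : T.obj Y ⟶ Y // T.η.app Y ≫ a = 𝟙 Y ∧ T.μ.app Y ≫ a = T.map a ≫ a}

noncomputable def mkAlg {Y : Cᵒᵖ ⥤ Type u} (st : AlgStr (T := T) Y) : T.Algebra where
  A := Y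
  a := st.1
  unit := st.2.1
  assoc := st.2.2

@[simp] lemma corestrict_f (A : T.Algebra) {B : T.Algebra} (φ : B ⟶ A) {S : Subfunctor A.A}
    (hS : SubClosed A S) (hφ : ∀ c x, φ.f.app c x ∈ S.obj c) :
    (corestrict A φ hS hφ).f = S.lift φ.f (range_le_of_mem _ hφ) := rfl

theorem solution_set (κ : Cardinal.{u}) (hκ : κ.IsRegular) (T : Monad (Cᵒᵖ ⥤ Type u))
    (hT : ∀ (J : Type u) [SmallCategory J], IsCardinalFiltered J κ →
      PreservesColimitsOfShape J T.toFunctor)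
    (J : Type u) [SmallCategory J] :
    SolutionSetCondition.{u} (Functor.const J : T.Algebra ⥤ (J ⥤ T.Algebra)) := by
  intro F
  have hO : Order.IsSuccLimit κ.ord := Cardinal.isSuccLimit_ord hκ.aleph0_le
  have hp : PreservesColimitsOfShape κ.ord.ToType T.toFunctor :=
    hT κ.ord.ToType (isCardinalFiltered_toType κ hκ)
  set l₀ : Cardinal.{u} :=
    Cardinal.sum fun c : C => Cardinal.sum fun j : J => Cardinal.mk ((F.obj j).A.obj (op c))
    with hl₀
  set μ : Cardinal.{u} := bnd T l₀ κ.ord with hμ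
  refine ⟨Σ (p : PreRep C μ.out), Σ (st : AlgStr (T := T) p.toPresheaf),
      (F ⟶ (Functor.const J).obj (mkAlg st)),
    fun i => mkAlg i.2.1, fun i => i.2.2, ?_⟩
  intro X h
  -- the subpresheaf generated by all legs
  set S₀ : Subfunctor X.A :=
    { obj := fun c => ⋃ j : J, Set.range ((h.app j).f.app c)
      map := by
        rintro c d g x hx
        rw [Set.mem_iUnion] at hx
        obtain ⟨j, y, rfl⟩ := hx
        refine Set.mem_iUnion.mpr ⟨j, (F.obj j).A.map g y, ?_⟩
        exact FunctorToTypes.naturality (h.app j).f g y } with hS₀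
  have h0 : psize S₀.toFunctor ≤ l₀ := by
    rw [psize, Cardinal.mk_sigma, hl₀]
    refine Cardinal.sum_le_sum _ _ fun c => ?_
    refine le_trans (le_of_eq rfl) (le_trans Cardinal.mk_iUnion_le_sum_mk ?_)
    exact Cardinal.sum_le_sum _ _ fun j => Cardinal.mk_range_le
  have hL : SubClosed X (algChain X S₀ κ.ord) := subClosed_algChain_limit X S₀ hO hp
  have hsize : psize (subAlgebra X hL).A ≤ μ := psize_algChain_le X S₀ h0 κ.ord
  obtain ⟨p, ⟨e⟩⟩ := exists_preRep (subAlgebra X hL).A μ.out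
    (by rw [Cardinal.mk_out]; exact hsize)
  set st : AlgStr (T := T) p.toPresheaf :=
    ⟨T.map e.inv ≫ (subAlgebra X hL).a ≫ e.hom,
      transport_unit _ e, transport_assoc _ e⟩ with hst
  have heHomh : T.map e.hom ≫ (mkAlg st).a = (subAlgebra X hL).a ≫ e.hom := by
    show T.map e.hom ≫ T.map e.inv ≫ (subAlgebra X hL).a ≫ e.hom = _
    rw [← Category.assoc, ← Functor.map_comp, e.hom_inv_id, CategoryTheory.Functor.map_id,
      Category.id_comp]
  have heInvh : T.map e.inv ≫ (subAlgebra X hL).a = (mkAlg st).a ≫ e.inv := by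
    show _ = (T.map e.inv ≫ (subAlgebra X hL).a ≫ e.hom) ≫ e.inv
    rw [Category.assoc, Category.assoc, e.hom_inv_id, Category.comp_id]
  set eHom : subAlgebra X hL ⟶ mkAlg st := ⟨e.hom, heHomh⟩ with heHom
  set eInv : mkAlg st ⟶ subAlgebra X hL := ⟨e.inv, heInvh⟩ with heInv
  have hmem : ∀ (j : J) (c : Cᵒᵖ) (x : (F.obj j).A.obj c),
      (h.app j).f.app c x ∈ (algChain X S₀ κ.ord).obj c := fun j c x =>
    le_algChain X S₀ κ.ord c (Set.mem_iUnion.mpr ⟨j, ⟨x, rfl⟩⟩)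
  have hnat : ∀ {j j' : J} (u : j ⟶ j'),
      F.map u ≫ corestrict X (h.app j') hL (hmem j') =
        corestrict X (h.app j) hL (hmem j) := by
    intro j j' u
    apply Monad.Algebra.Hom.ext
    simp only [Monad.Algebra.comp_f, corestrict_f]
    apply (cancel_mono (Subfunctor.ι (algChain X S₀ κ.ord))).mp
    show ((F.map u).f ≫ (algChain X S₀ κ.ord).lift (h.app j').f (range_le_of_mem _ (hmem j'))) ≫
      (algChain X S₀ κ.ord).ι =
        (algChain X S₀ κ.ord).lift (h.app j).f (range_le_of_mem _ (hmem j)) ≫ (algChain X S₀ κ.ord).ι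
    rw [Category.assoc, Subfunctor.lift_ι, Subfunctor.lift_ι]
    have := congrArg Monad.Algebra.Hom.f (h.naturality u)
    simp only [Monad.Algebra.comp_f] at this
    rw [this]
    show (h.app j).f ≫ (𝟙 X : X ⟶ X).f = (h.app j).f
    simp
  set h' : F ⟶ (Functor.const J).obj (subAlgebra X hL) :=
    { app := fun j => corestrict X (h.app j) hL (hmem j)
      naturality := fun j j' u => by
        rw [hnat u]
        show _ = corestrict X (h.app j) hL (hmem j) ≫ 𝟙 _
        rw [Category.comp_id] } with hh'
  refine ⟨⟨p, st, h' ≫ (Functor.const J).map eHom⟩, eInv ≫ subAlgebraι X hL, ?_⟩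
  apply NatTrans.ext
  funext j
  show (h'.app j ≫ eHom) ≫ eInv ≫ subAlgebraι X hL = h.app j
  have h5 : eHom ≫ eInv = 𝟙 _ := by
    apply Monad.Algebra.Hom.ext
    show e.hom ≫ e.inv = _
    simp
  rw [Category.assoc, ← Category.assoc eHom, h5, Category.id_comp]
  exact corestrict_ι X (h.app j) hL (hmem j)

end Solution


/-- paper's Corollary 5.5, for presheaf categories in
1-categorical form: if `T` is a monad on `Pr(C) = Cᵒᵖ ⥤ Type` whose underlying
endofunctor preserves colimits of `κ`-filtered diagrams for some regular
cardinal `κ`, then the Eilenberg–Moore category of `T`-algebras has all small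
colimits. -/
theorem stmt_11 {C : Type u} [SmallCategory C] (κ : Cardinal.{u})
    (hκ : κ.IsRegular) (T : Monad (Cᵒᵖ ⥤ Type u))
    (hT : ∀ (J : Type u) [SmallCategory J], IsCardinalFiltered J κ →
      Limits.PreservesColimitsOfShape J T.toFunctor) :
    Limits.HasColimits T.Algebra := by
  letI : Limits.HasLimits T.Algebra := hasLimits_of_hasLimits_createsLimits (Monad.forget T)
  constructor
  intro J hJ
  rw [Limits.hasColimitsOfShape_iff_isRightAdjoint_const]
  exact isRightAdjoint_of_preservesLimits_of_solutionSetCondition _ (solution_set κ hκ T hT J)
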